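/- Let g ≥ 1 and let t_1, …, t_g be complex numbers of absolute value 1. Set P(T) = ∏_{j=1}^{g} (T − t_j)(T − t_j⁻¹) and suppose P(T) = P(−T). Then there exist complex numbers s_1, …, s_g of absolute value 1 such that ∏_{j=1}^{g} (T − s_j)(T − s_j⁻¹) = P(T) and s_j⁻¹ = −s_{g+1−j} for all j = 1, …, g. -/

import Mathlib

open Polynomial Finset

noncomputable def Faux (t : ℂ) : ℂ[X] := (X - C t) * (X - C t⁻¹)

lemma Faux_sq_neg_one {t : ℂ} (ht : t ^ 2 = -1) : Faux t = X ^ 2 + 1 := by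
  have h0 : t ≠ 0 := by intro h; rw [h] at ht; simp at ht
  have hinv : t⁻¹ = -t := inv_eq_of_mul_eq_one_right (by rw [mul_neg, ← sq, ht, neg_neg])
  rw [Faux, hinv, map_neg]
  have h1 : (X - C t) * (X - -C t) = X ^ 2 - C t ^ 2 := by ring
  rw [h1, ← map_pow, ht, map_neg, map_one]
  ring

lemma aux (n : ℕ) : ∀ (M : Multiset ℂ), Multiset.card M = n →
    (∀ x ∈ M, ‖x‖ = 1) →
    ((M.map Faux).prod.comp (-X) = (M.map Faux).prod) →
    ∃ L : List ℂ, L.length = n ∧ (∀ x ∈ L, ‖x‖ = 1) ∧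
      (L.map Faux).prod = (M.map Faux).prod ∧
      ∀ i < n, (L.getD i 0)⁻¹ = -(L.getD (n - 1 - i) 0) := by
  induction n using Nat.strong_induction_on with
  | _ n IH =>
  intro M hcard hM heven
  rcases Nat.eq_zero_or_pos n with h0 | hpos
  · subst h0
    have : M = 0 := Multiset.card_eq_zero.mp hcard
    subst this
    exact ⟨[], by simp, by simp, by simp, by omega⟩
  by_cases hall : ∀ b ∈ M, b ^ 2 = -1
  · -- all elements are ±i : use list of i's
    refine ⟨List.replicate n Complex.I, by simp, ?_, ?_, ?_⟩
    · intro x hx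
      rw [List.eq_of_mem_replicate hx]
      exact Complex.norm_I
    · have h1 : M.map Faux = Multiset.replicate n (X ^ 2 + 1) := by
        rw [Multiset.eq_replicate]
        constructor
        · simpa using hcard
        · intro x hx
          obtain ⟨b, hb, rfl⟩ := Multiset.mem_map.mp hx
          exact Faux_sq_neg_one (hall b hb)
      have h2 : (List.replicate n Complex.I).map Faux
          = List.replicate n (X ^ 2 + 1) := by
        rw [List.map_replicate, Faux_sq_neg_one (by rw [Complex.I_sq])]
      rw [h1, h2]
      simp [Multiset.prod_replicate, List.prod_replicate]
    · intro i hi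
      have hgi : ∀ k, k < n → (List.replicate n Complex.I).getD k 0 = Complex.I := by
        intro k hk
        rw [List.getD_eq_getElem _ _ (by simpa using hk)]
        simp
      rw [hgi i hi, hgi (n - 1 - i) (by omega), Complex.inv_I]
  · push_neg at hall
    obtain ⟨a, haM, ha2⟩ := hall
    have haabs : ‖a‖ = 1 := hM a haM
    have ha0 : a ≠ 0 := by
      intro h; rw [h] at haabs; simp at haabs
    set P : ℂ[X] := (M.map Faux).prod with hP
    have hPa : P.eval a = 0 := by
      have : Faux a ∣ P := Multiset.dvd_prod (Multiset.mem_map_of_mem _ haM)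
      obtain ⟨Q, hQ⟩ := this
      rw [hQ, eval_mul, Faux, eval_mul]
      simp
    have hPna : P.eval (-a) = 0 := by
      have := congrArg (eval a) heven
      rwa [eval_comp, eval_neg, eval_X, hPa] at this
    -- find the partner u
    have hMsplit : M = a ::ₘ M.erase a := (Multiset.cons_erase haM).symm
    have hPsplit : P = Faux a * ((M.erase a).map Faux).prod := by
      conv_lhs => rw [hP, hMsplit]
      rw [Multiset.map_cons, Multiset.prod_cons]
    have hFa_ne : (Faux a).eval (-a) ≠ 0 := by
      rw [Faux, eval_mul, eval_sub, eval_sub, eval_X, eval_C, eval_C]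
      intro h
      rcases mul_eq_zero.mp h with h | h
      · exact ha0 (by linear_combination -h/2)
      · apply ha2
        have h1 : a⁻¹ = -a := by linear_combination -h
        have h2 : a * a⁻¹ = 1 := mul_inv_cancel₀ ha0
        rw [h1] at h2
        linear_combination -h2
    have hQna : (((M.erase a).map Faux).prod).eval (-a) = 0 := by
      have := hPna
      rw [hPsplit, eval_mul] at this
      exact (mul_eq_zero.mp this).resolve_left hFa_ne
    rw [eval_multiset_prod, Multiset.map_map, Multiset.prod_eq_zero_iff] at hQna
    obtain ⟨u, hu, hq0⟩ := Multiset.mem_map.mp hQna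
    simp only [Function.comp_apply] at hq0
    have hu0 : u ≠ 0 := by
      have := hM u (Multiset.mem_of_mem_erase hu)
      intro h; rw [h] at this; simp at this
    have hFu : Faux u = (X + C a) * (X + C a⁻¹) := by
      simp only [Faux, eval_mul, eval_sub, eval_X, eval_C] at hq0
      rcases mul_eq_zero.mp hq0 with h | h
      · have hu_eq : u = -a := by linear_combination -h
        subst hu_eq
        rw [Faux, inv_neg, map_neg, map_neg]
        ring
      · have hu_eq : u⁻¹ = -a := by linear_combination -h
        have hu_eq2 : u = -a⁻¹ := by
          rw [← inv_inv u, hu_eq, inv_neg]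
        subst hu_eq2
        rw [Faux, inv_neg, inv_inv, map_neg, map_neg]
        ring
    -- the quartet E = Faux a * Faux u is even
    set M' : Multiset ℂ := (M.erase a).erase u with hM'
    have hMsplit2 : M = a ::ₘ u ::ₘ M' := by
      rw [hM', Multiset.cons_erase hu, Multiset.cons_erase haM]
    have hn2 : 2 ≤ n := by
      have := congrArg Multiset.card hMsplit2
      rw [hcard] at this
      simp at this
      omega
    have hcard' : Multiset.card M' = n - 2 := by
      have := congrArg Multiset.card hMsplit2
      rw [hcard] at this
      simp at this
      omega
    have hPsplit2 : P = Faux a * Faux u * ((M'.map Faux).prod) := by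
      conv_lhs => rw [hP, hMsplit2]
      rw [Multiset.map_cons, Multiset.map_cons, Multiset.prod_cons, Multiset.prod_cons,
        mul_assoc]
    have hE : (Faux a * Faux u).comp (-X) = Faux a * Faux u := by
      rw [hFu, Faux]
      simp only [mul_comp, sub_comp, add_comp, X_comp, C_comp]
      ring
    have hEmonic : (Faux a * Faux u).Monic := by
      rw [Faux]
      exact ((monic_X_sub_C a).mul (monic_X_sub_C a⁻¹)).mul
        (by rw [hFu]; exact (monic_X_add_C a).mul (monic_X_add_C a⁻¹))
    have hQ'even : ((M'.map Faux).prod).comp (-X) = (M'.map Faux).prod := by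
      have h := heven
      rw [hPsplit2, mul_comp, hE] at h
      exact mul_left_cancel₀ hEmonic.ne_zero h
    obtain ⟨L', hlen', habs', hprod', hidx'⟩ := IH (n - 2) (by omega) M' hcard'
      (fun x hx => hM x (by rw [hMsplit2]; simp [hx])) hQ'even
    refine ⟨a :: (L' ++ [-a⁻¹]), by simp [hlen']; omega, ?_, ?_, ?_⟩
    · intro x hx
      simp at hx
      rcases hx with rfl | hx | rfl
      · exact haabs
      · exact habs' x hx
      · simp [map_inv₀, haabs]
    · rw [List.map_cons, List.map_append, List.prod_cons, List.prod_append,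
        List.map_singleton, List.prod_singleton, hprod']
      have hFna : Faux (-a⁻¹) = Faux u := by
        rw [hFu, Faux, inv_neg, inv_inv, map_neg, map_neg]
        ring
      rw [hFna, hPsplit2]
      ring
    · intro i hi
      set L : List ℂ := a :: (L' ++ [-a⁻¹]) with hL
      have hlenL : L.length = n := by simp [hL, hlen']; omega
      have hget0 : L.getD 0 0 = a := rfl
      have hgetlast : L.getD (n - 1) 0 = -a⁻¹ := by
        have h1 : n - 1 = (n - 2) + 1 := by omega
        rw [hL, h1, List.getD_cons_succ, List.getD_append_right _ _ _ _ (by omega),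
          hlen']
        simp
      have hgetmid : ∀ k, 1 ≤ k → k ≤ n - 2 → L.getD k 0 = L'.getD (k - 1) 0 := by
        intro k hk1 hk2
        have h1 : k = (k - 1) + 1 := by omega
        rw [hL, h1, List.getD_cons_succ, List.getD_append _ _ _ _ (by omega)]
        simp
      rcases Nat.eq_zero_or_pos i with rfl | hi1
      · rw [hget0]
        have : n - 1 - 0 = n - 1 := by omega
        rw [this, hgetlast, neg_neg]
      rcases Nat.lt_or_ge i (n - 1) with hi2 | hi2
      · -- middle
        rw [hgetmid i hi1 (by omega), hgetmid (n - 1 - i) (by omega) (by omega)]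
        have h := hidx' (i - 1) (by omega)
        have heq : n - 2 - 1 - (i - 1) = n - 1 - i - 1 := by omega
        rw [heq] at h
        exact h
      · -- i = n - 1
        have : i = n - 1 := by omega
        subst this
        rw [hgetlast]
        have : n - 1 - (n - 1) = 0 := by omega
        rw [this, hget0, inv_neg, inv_inv]

lemma list_prod_getD (G : ℂ → ℂ[X]) (L : List ℂ) :
    ∏ i ∈ Finset.range L.length, G (L.getD i 0) = (L.map G).prod := by
  induction L with
  | nil => simp
  | cons a l ih =>
    rw [List.length_cons, Finset.prod_range_succ', List.map_cons, List.prod_cons]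
    simp only [List.getD_cons_succ, List.getD_cons_zero]
    rw [ih, mul_comm]

theorem stmt_11 (g : ℕ) (hg : 1 ≤ g) (t : ℕ → ℂ)
    (ht : ∀ j ∈ Finset.Icc 1 g, ‖t j‖ = 1)
    (heven : (∏ j ∈ Finset.Icc 1 g, ((X - C (t j)) * (X - C (t j)⁻¹))).comp (-X) =
      ∏ j ∈ Finset.Icc 1 g, ((X - C (t j)) * (X - C (t j)⁻¹))) :
    ∃ s : ℕ → ℂ, (∀ j ∈ Finset.Icc 1 g, ‖s j‖ = 1) ∧
      (∏ j ∈ Finset.Icc 1 g, ((X - C (s j)) * (X - C (s j)⁻¹))) =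
        (∏ j ∈ Finset.Icc 1 g, ((X - C (t j)) * (X - C (t j)⁻¹))) ∧
      (∀ j ∈ Finset.Icc 1 g, (s j)⁻¹ = -s (g + 1 - j)) := by
  set M : Multiset ℂ := (Finset.Icc 1 g).val.map t with hMdef
  have hprodM : (M.map Faux).prod = ∏ j ∈ Finset.Icc 1 g, ((X - C (t j)) * (X - C (t j)⁻¹)) := by
    rw [hMdef, Multiset.map_map]
    rfl
  have hcard : Multiset.card M = g := by
    rw [hMdef]
    simp
  obtain ⟨L, hlen, habs, hprod, hidx⟩ := aux g M hcard
    (by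
      intro x hx
      obtain ⟨j, hj, rfl⟩ := Multiset.mem_map.mp hx
      exact ht j hj)
    (by rw [hprodM]; exact heven)
  refine ⟨fun j => L.getD (j - 1) 0, ?_, ?_, ?_⟩
  · intro j hj
    simp only [Finset.mem_Icc] at hj
    have : j - 1 < L.length := by omega
    show ‖L.getD (j - 1) 0‖ = 1
    rw [List.getD_eq_getElem _ _ this]
    exact habs _ (List.getElem_mem this)
  · have h1 : Finset.Icc 1 g = Finset.Ico 1 (g + 1) := by
      rw [Finset.Ico_add_one_right_eq_Icc]
    calc ∏ j ∈ Finset.Icc 1 g,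
          ((X - C (L.getD (j - 1) 0)) * (X - C (L.getD (j - 1) 0)⁻¹))
        = ∏ i ∈ Finset.range g, Faux (L.getD i 0) := by
          rw [h1, Finset.prod_Ico_eq_prod_range]
          simp only [Nat.add_sub_cancel]
          refine Finset.prod_congr rfl fun i _ => ?_
          have h4 : 1 + i - 1 = i := by omega
          rw [h4, Faux]
      _ = (L.map Faux).prod := by rw [← hlen]; exact list_prod_getD Faux L
      _ = _ := by rw [hprod, hprodM]
  · intro j hj
    simp only [Finset.mem_Icc] at hj
    have h := hidx (j - 1) (by omega)
    have heq : g - 1 - (j - 1) = g + 1 - j - 1 := by omega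
    rw [heq] at h
    exact h
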